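/- Let (Ω, 𝔉, P) be a probability space with a filtration (𝔉_t)_{t≥0}. Let (Δ_t)_{t≥0} be a nonnegative, adapted, integrable real-valued process, and for each t ≥ 1 let β_{t−1}, X_{t−1}, Z_{t−1} be nonnegative, 𝔉_{t−1}-measurable, integrable real-valued random variables satisfying, almost surely, E[Δ_t | 𝔉_{t−1}] ≤ (1 + β_{t−1}) Δ_{t−1} + Z_{t−1} − X_{t−1}. For ξ ∈ {0, 1} define R_0(ξ) := Δ_0 and, for t ≥ 1, R_t(ξ) := Δ_t · ∏_{s=1}^t (1 + β_{s−1})^{−1} − Σ_{s=1}^t (Z_{s−1} − ξ X_{s−1}) · ∏_{m=1}^s (1 + β_{m−1})^{−1}. Then for each ξ ∈ {0, 1}, the process (R_t(ξ))_{t≥0} is a supermartingale with respect to the filtration (𝔉_t)_{t≥0}. -/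

import Mathlib

open MeasureTheory ProbabilityTheory Filter Finset

/-- the discounted compensated process in the quantitative
Robbins–Siegmund argument is a supermartingale. -/
theorem robbins_siegmund_supermartingale {Ω : Type*} [m0 : MeasurableSpace Ω]
    (P : Measure Ω) [IsProbabilityMeasure P]
    (F : Filtration ℕ m0)
    (Δ β X Z : ℕ → Ω → ℝ)
    (hΔadapted : Adapted F Δ) (hΔnonneg : ∀ t ω, 0 ≤ Δ t ω)
    (hΔint : ∀ t, Integrable (Δ t) P)
    (hβadapted : Adapted F β) (hβnonneg : ∀ t ω, 0 ≤ β t ω)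
    (hβint : ∀ t, Integrable (β t) P)
    (hXadapted : Adapted F X) (hXnonneg : ∀ t ω, 0 ≤ X t ω)
    (hXint : ∀ t, Integrable (X t) P)
    (hZadapted : Adapted F Z) (hZnonneg : ∀ t ω, 0 ≤ Z t ω)
    (hZint : ∀ t, Integrable (Z t) P)
    (hrec : ∀ t : ℕ, ∀ᵐ ω ∂P,
      (P[Δ (t + 1) | F t]) ω ≤ (1 + β t ω) * Δ t ω + Z t ω - X t ω)
    (ξ : ℝ) (hξ : ξ = 0 ∨ ξ = 1)
    (R : ℕ → Ω → ℝ)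
    (hR : ∀ t ω, R t ω =
      Δ t ω * (∏ s ∈ range t, (1 + β s ω))⁻¹ -
        ∑ s ∈ range t, (Z s ω - ξ * X s ω) * (∏ m ∈ range (s + 1), (1 + β m ω))⁻¹) :
    Supermartingale R F P := by
  -- basic positivity facts about the discount factors
  have hprod_one_le : ∀ t ω, (1 : ℝ) ≤ ∏ s ∈ range t, (1 + β s ω) := by
    intro t ω
    have := Finset.prod_le_prod (s := range t) (f := fun _ => (1 : ℝ))
      (g := fun s => 1 + β s ω) (fun i _ => zero_le_one)
      (fun i _ => by linarith [hβnonneg i ω])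
    simpa using this
  have hprod_pos : ∀ t ω, (0 : ℝ) < ∏ s ∈ range t, (1 + β s ω) := fun t ω =>
    lt_of_lt_of_le one_pos (hprod_one_le t ω)
  have hA_nonneg : ∀ t ω, (0 : ℝ) ≤ (∏ s ∈ range t, (1 + β s ω))⁻¹ := fun t ω =>
    inv_nonneg.2 (hprod_pos t ω).le
  have hA_le_one : ∀ t ω, (∏ s ∈ range t, (1 + β s ω))⁻¹ ≤ 1 := fun t ω =>
    inv_le_one_of_one_le₀ (hprod_one_le t ω)
  have hA_bound : ∀ t, ∃ C : ℝ, ∀ ω, ‖(∏ s ∈ range t, (1 + β s ω))⁻¹‖ ≤ C := by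
    intro t
    exact ⟨1, fun ω => by
      rw [Real.norm_eq_abs, abs_of_nonneg (hA_nonneg t ω)]; exact hA_le_one t ω⟩
  -- measurability of the discount factors
  have hA_meas : ∀ n t : ℕ, t ≤ n + 1 →
      Measurable[F n] (fun ω => (∏ s ∈ range t, (1 + β s ω))⁻¹) := by
    intro n t ht
    apply Measurable.inv
    apply Finset.measurable_prod
    intro s hs
    have hsn : s ≤ n := by have := Finset.mem_range.1 hs; omega
    exact measurable_const.add ((hβadapted s).mono (F.mono hsn) le_rfl)
  have hA_aesm : ∀ t : ℕ,
      AEStronglyMeasurable (fun ω => (∏ s ∈ range t, (1 + β s ω))⁻¹) P := by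
    intro t
    exact (((hA_meas t t (by omega)).stronglyMeasurable).mono (F.le t)).aestronglyMeasurable
  -- the summand functions and their integrability
  have hterm_int : ∀ s : ℕ,
      Integrable (fun ω => (Z s ω - ξ * X s ω) * (∏ m ∈ range (s + 1), (1 + β m ω))⁻¹) P := by
    intro s
    have h1 : Integrable (fun ω =>
        (∏ m ∈ range (s + 1), (1 + β m ω))⁻¹ * (Z s ω - ξ * X s ω)) P :=
      Integrable.bdd_mul ((hZint s).sub ((hXint s).const_mul ξ)) (hA_aesm (s + 1))
        (ae_of_all _ (hA_bound (s + 1)).choose_spec)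
    exact h1.congr (ae_of_all _ fun ω => mul_comm _ _)
  have hΔA_int : ∀ t : ℕ,
      Integrable (fun ω => Δ t ω * (∏ s ∈ range t, (1 + β s ω))⁻¹) P := by
    intro t
    have h1 : Integrable (fun ω => (∏ s ∈ range t, (1 + β s ω))⁻¹ * Δ t ω) P :=
      Integrable.bdd_mul (hΔint t) (hA_aesm t) (ae_of_all _ (hA_bound t).choose_spec)
    exact h1.congr (ae_of_all _ fun ω => mul_comm _ _)
  have hRdef : ∀ t, R t = fun ω =>
      Δ t ω * (∏ s ∈ range t, (1 + β s ω))⁻¹ -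
        ∑ s ∈ range t, (Z s ω - ξ * X s ω) * (∏ m ∈ range (s + 1), (1 + β m ω))⁻¹ :=
    fun t => funext (hR t)
  -- integrability of R
  have hRint : ∀ t, Integrable (R t) P := by
    intro t
    rw [hRdef t]
    exact (hΔA_int t).sub (integrable_finset_sum _ fun s _ => hterm_int s)
  -- adaptedness of R
  have hRadapted : Adapted F R := by
    intro t
    rw [hRdef t]
    apply Measurable.sub
    · exact (hΔadapted t).mul (hA_meas t t (by omega))
    · apply Finset.measurable_sum
      intro s hs
      have hst : s < t := Finset.mem_range.1 hs
      have hZm : Measurable[F t] (Z s) :=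
        (hZadapted s).mono (F.mono hst.le) le_rfl
      have hXm : Measurable[F t] (X s) :=
        (hXadapted s).mono (F.mono hst.le) le_rfl
      exact (hZm.sub (hXm.const_mul ξ)).mul (hA_meas t (s + 1) (by omega))
  -- the supermartingale inequality
  refine supermartingale_nat (fun t => (hRadapted t).stronglyMeasurable) hRint ?_
  intro t
  set g : Ω → ℝ := fun ω => (∏ m ∈ range (t + 1), (1 + β m ω))⁻¹ with hg
  have hg_meas : StronglyMeasurable[F t] g := (hA_meas t (t + 1) le_rfl).stronglyMeasurable
  set S : Ω → ℝ := fun ω =>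
      ∑ s ∈ range (t + 1), (Z s ω - ξ * X s ω) * (∏ m ∈ range (s + 1), (1 + β m ω))⁻¹ with hS
  have hS_int : Integrable S P := integrable_finset_sum _ fun s _ => hterm_int s
  have hS_meas : StronglyMeasurable[F t] S := by
    apply Measurable.stronglyMeasurable
    apply Finset.measurable_sum
    intro s hs
    have hst : s < t + 1 := Finset.mem_range.1 hs
    have hst' : s ≤ t := by omega
    have hZm : Measurable[F t] (Z s) := (hZadapted s).mono (F.mono hst') le_rfl
    have hXm : Measurable[F t] (X s) := (hXadapted s).mono (F.mono hst') le_rfl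
    exact (hZm.sub (hXm.const_mul ξ)).mul (hA_meas t (s + 1) (by omega))
  have hgΔ_int : Integrable (g * Δ (t + 1)) P :=
    Integrable.bdd_mul (hΔint (t + 1)) (hA_aesm (t + 1)) (ae_of_all _ (hA_bound (t + 1)).choose_spec)
  -- decompose the conditional expectation
  have hRsplit : R (t + 1) = g * Δ (t + 1) - S := by
    funext ω
    simp only [hR, Pi.sub_apply, Pi.mul_apply, hg, hS, mul_comm]
  have h1 : P[R (t + 1)|F t] =ᵐ[P] P[g * Δ (t + 1)|F t] - P[S|F t] := by
    rw [hRsplit]; exact condExp_sub hgΔ_int hS_int _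
  have h2 : P[g * Δ (t + 1)|F t] =ᵐ[P] g * P[Δ (t + 1)|F t] :=
    condExp_mul_of_stronglyMeasurable_left hg_meas hgΔ_int (hΔint (t + 1))
  have h3 : P[S|F t] = S := condExp_of_stronglyMeasurable (F.le t) hS_meas hS_int
  filter_upwards [h1, h2, hrec t] with ω hω1 hω2 hωrec
  rw [hω1]
  simp only [Pi.sub_apply, Pi.mul_apply, hω2, h3]
  -- pointwise algebra
  have hb : (0 : ℝ) < 1 + β t ω := by linarith [hβnonneg t ω]
  have hgb : g ω * (1 + β t ω) = (∏ s ∈ range t, (1 + β s ω))⁻¹ := by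
    simp only [hg]
    rw [prod_range_succ, mul_inv, mul_assoc, inv_mul_cancel₀ hb.ne', mul_one]
  have hg0 : 0 ≤ g ω := hA_nonneg (t + 1) ω
  have hSsucc : S ω = (∑ s ∈ range t, (Z s ω - ξ * X s ω) *
      (∏ m ∈ range (s + 1), (1 + β m ω))⁻¹) + (Z t ω - ξ * X t ω) * g ω := by
    simp only [hS, hg]
    rw [sum_range_succ]
  have hstep : g ω * (P[Δ (t + 1)|F t]) ω ≤
      g ω * ((1 + β t ω) * Δ t ω + Z t ω - X t ω) :=
    mul_le_mul_of_nonneg_left hωrec hg0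
  rw [hR t, hSsucc]
  have hgX : 0 ≤ g ω * X t ω := mul_nonneg hg0 (hXnonneg t ω)
  have hkey : g ω * ((1 + β t ω) * Δ t ω + Z t ω - X t ω) =
      Δ t ω * (∏ s ∈ range t, (1 + β s ω))⁻¹ + g ω * Z t ω - g ω * X t ω := by
    calc g ω * ((1 + β t ω) * Δ t ω + Z t ω - X t ω)
        = (g ω * (1 + β t ω)) * Δ t ω + g ω * Z t ω - g ω * X t ω := by ring
      _ = Δ t ω * (∏ s ∈ range t, (1 + β s ω))⁻¹ + g ω * Z t ω - g ω * X t ω := by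
          rw [hgb]; ring
  rcases hξ with hξ | hξ <;> subst hξ <;> linarith [hstep, hkey, hgX]
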